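/- Let ε > 0 and let G = (V, E) be a finite simple graph with adjacency matrix A ∈ ℝ^{V×V}. If P is a partition of V that is not ε-regular, then P has a refinement Q with |Q| ≤ |P|·4^{|P|} and ‖A_Q‖² > ‖A_P‖² + ε⁵·|V|², where ‖·‖ is the Frobenius norm. -/

import Mathlib

open Finset

/-- `P` is a partition of the finite type `V`. -/
def IsPartition {V : Type*} [Fintype V] [DecidableEq V] (P : Finset (Finset V)) : Prop :=
  (∀ I ∈ P, I.Nonempty) ∧
  (∀ I ∈ P, ∀ J ∈ P, I ≠ J → Disjoint I J) ∧
  P.sup id = Finset.univ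

/-- `Q` is a refinement of `P`. -/
def IsRefinement {V : Type*} [Fintype V] [DecidableEq V] (Q P : Finset (Finset V)) : Prop :=
  ∀ J ∈ Q, ∃ I ∈ P, J ⊆ I

/-- The edge density of the pair `(I, J)` in the graph `G`. -/
noncomputable def density {V : Type*} [Fintype V] [DecidableEq V] (G : SimpleGraph V)
    [DecidableRel G.Adj] (I J : Finset V) : ℝ :=
  (((I ×ˢ J).filter fun p => G.Adj p.1 p.2).card : ℝ) / (I.card * J.card)

/-- The pair `(I, J)` is `ε`-regular. -/
def IsRegularPair {V : Type*} [Fintype V] [DecidableEq V] (G : SimpleGraph V)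
    [DecidableRel G.Adj] (ε : ℝ) (I J : Finset V) : Prop :=
  ∀ X ⊆ I, ∀ Y ⊆ J, (X.card : ℝ) > ε * I.card → (Y.card : ℝ) > ε * J.card →
    |density G X Y - density G I J| ≤ ε

open scoped Classical in
/-- The partition `P` is `ε`-regular. -/
noncomputable def IsRegularPartition {V : Type*} [Fintype V] [DecidableEq V] (G : SimpleGraph V)
    [DecidableRel G.Adj] (ε : ℝ) (P : Finset (Finset V)) : Prop :=
  ∑ I ∈ P, ∑ J ∈ P, (if IsRegularPair G ε I J then 0 else (I.card * J.card : ℝ))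
    ≤ ε * (Fintype.card V) ^ 2

/-- The orthogonal projection of `M` onto matrices constant on `I × J` and `0` outside:
its entries on `I × J` all equal the average of `M` over `I × J`. -/
noncomputable def proj {V : Type*} [Fintype V] [DecidableEq V] (M : Matrix V V ℝ)
    (I J : Finset V) : Matrix V V ℝ :=
  fun i j => if i ∈ I ∧ j ∈ J then (∑ x ∈ I, ∑ y ∈ J, M x y) / (I.card * J.card) else 0

/-- `M_P = ∑_{I, J ∈ P} M_{I,J}`. -/
noncomputable def projPartition {V : Type*} [Fintype V] [DecidableEq V] (M : Matrix V V ℝ)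
    (P : Finset (Finset V)) : Matrix V V ℝ :=
  ∑ I ∈ P, ∑ J ∈ P, proj M I J

/-- The Frobenius norm `‖M‖ = Tr(Mᵀ M)^{1/2}`. -/
noncomputable def frobNorm {V : Type*} [Fintype V] (M : Matrix V V ℝ) : ℝ :=
  Real.sqrt (Matrix.trace (M.transpose * M))

section aux
variable {V : Type*} [Fintype V] [DecidableEq V]

noncomputable def ip (M N : Matrix V V ℝ) : ℝ := ∑ i, ∑ j, M i j * N i j

noncomputable def cS (M : Matrix V V ℝ) (I J : Finset V) : ℝ := ∑ x ∈ I, ∑ y ∈ J, M x y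

lemma aux_frob_sq (M : Matrix V V ℝ) : frobNorm M ^ 2 = ip M M := by
  have h : Matrix.trace (M.transpose * M) = ip M M := by
    simp only [Matrix.trace, Matrix.diag, Matrix.mul_apply, Matrix.transpose_apply, ip]
    exact Finset.sum_comm
  rw [frobNorm, h, Real.sq_sqrt]
  exact Finset.sum_nonneg fun i _ => Finset.sum_nonneg fun j _ => mul_self_nonneg _

variable {M : Matrix V V ℝ} {R : Finset (Finset V)}

lemma aux_cellval (hd : ∀ a ∈ R, ∀ b ∈ R, a ≠ b → Disjoint a b)
    {a b : Finset V} (ha : a ∈ R) (hb : b ∈ R) {i j : V} (hi : i ∈ a) (hj : j ∈ b) :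
    projPartition M R i j = cS M a b / (a.card * b.card) := by
  have : projPartition M R i j = ∑ I ∈ R, ∑ J ∈ R, proj M I J i j := by
    simp [projPartition, Matrix.sum_apply]
  rw [this, Finset.sum_eq_single a]
  · rw [Finset.sum_eq_single b]
    · simp [proj, hi, hj, cS]
    · intro J hJ hJb
      have : j ∉ J := fun hjJ => Finset.disjoint_left.1 (hd b hb J hJ (Ne.symm hJb)) hj hjJ
      simp [proj, this]
    · exact fun h => absurd hb h
  · intro I hI hIa
    have : i ∉ I := fun hiI => Finset.disjoint_left.1 (hd a ha I hI (Ne.symm hIa)) hi hiI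
    simp [proj, this]
  · exact fun h => absurd ha h

lemma aux_sum_parts (hd : ∀ a ∈ R, ∀ b ∈ R, a ≠ b → Disjoint a b)
    (hcov : R.sup id = Finset.univ) (f : V → ℝ) :
    ∑ i, f i = ∑ a ∈ R, ∑ i ∈ a, f i := by
  have h1 : (Finset.univ : Finset V) = R.biUnion id := by
    rw [← hcov, Finset.sup_eq_biUnion]
  rw [h1]
  exact Finset.sum_biUnion (fun a ha b hb hne => hd a (mem_coe.1 ha) b (mem_coe.1 hb) hne)

lemma aux_cs_cell (hd : ∀ a ∈ R, ∀ b ∈ R, a ≠ b → Disjoint a b)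
    {a b : Finset V} (ha : a ∈ R) (hb : b ∈ R) (hane : a.Nonempty) (hbne : b.Nonempty) :
    cS (projPartition M R) a b = cS M a b := by
  have hca : (a.card : ℝ) ≠ 0 := Nat.cast_ne_zero.2 (Finset.card_ne_zero.2 hane)
  have hcb : (b.card : ℝ) ≠ 0 := Nat.cast_ne_zero.2 (Finset.card_ne_zero.2 hbne)
  have : cS (projPartition M R) a b = ∑ i ∈ a, ∑ j ∈ b, cS M a b / (a.card * b.card) := by
    unfold cS
    exact Finset.sum_congr rfl fun i hi => Finset.sum_congr rfl fun j hj =>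
      aux_cellval hd ha hb hi hj
  rw [this]
  simp only [Finset.sum_const, nsmul_eq_mul]
  field_simp

noncomputable def energy (M : Matrix V V ℝ) (R : Finset (Finset V)) : ℝ :=
  ∑ a ∈ R, ∑ b ∈ R, cS M a b ^ 2 / (a.card * b.card)

lemma aux_ip_double (hd : ∀ a ∈ R, ∀ b ∈ R, a ≠ b → Disjoint a b)
    (hcov : R.sup id = Finset.univ) (F : V → V → ℝ) :
    ∑ i, ∑ j, F i j = ∑ a ∈ R, ∑ b ∈ R, ∑ i ∈ a, ∑ j ∈ b, F i j := by
  rw [aux_sum_parts hd hcov (fun i => ∑ j, F i j)]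
  refine Finset.sum_congr rfl fun a ha => ?_
  rw [Finset.sum_comm]
  rw [aux_sum_parts hd hcov (fun j => ∑ i ∈ a, F i j)]
  refine Finset.sum_congr rfl fun b hb => Finset.sum_comm

lemma aux_ip_self (hne : ∀ a ∈ R, a.Nonempty) (hd : ∀ a ∈ R, ∀ b ∈ R, a ≠ b → Disjoint a b)
    (hcov : R.sup id = Finset.univ) :
    ip (projPartition M R) (projPartition M R) = energy M R := by
  rw [ip, aux_ip_double hd hcov]
  refine Finset.sum_congr rfl fun a ha => Finset.sum_congr rfl fun b hb => ?_
  have hca : (a.card : ℝ) ≠ 0 := Nat.cast_ne_zero.2 (Finset.card_ne_zero.2 (hne a ha))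
  have hcb : (b.card : ℝ) ≠ 0 := Nat.cast_ne_zero.2 (Finset.card_ne_zero.2 (hne b hb))
  have : ∀ i ∈ a, ∀ j ∈ b, projPartition M R i j * projPartition M R i j
      = (cS M a b / (a.card * b.card))^2 := by
    intro i hi j hj
    rw [aux_cellval hd ha hb hi hj]; ring
  rw [Finset.sum_congr rfl fun i hi => Finset.sum_congr rfl fun j hj => this i hi j hj]
  simp only [Finset.sum_const, nsmul_eq_mul]
  field_simp

end aux

section aux2
variable {V : Type*} [Fintype V] [DecidableEq V]
variable {M : Matrix V V ℝ} {Q P : Finset (Finset V)} {pa : Finset V → Finset V}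

lemma aux_ip_sub_sub (X Y : Matrix V V ℝ) :
    ip (X - Y) (X - Y) = ip X X - ip X Y - ip Y X + ip Y Y := by
  simp only [ip, Matrix.sub_apply, sub_mul, mul_sub, Finset.sum_sub_distrib]
  ring

lemma aux_ip_comm (X Y : Matrix V V ℝ) : ip X Y = ip Y X := by
  simp only [ip]
  exact Finset.sum_congr rfl fun i _ => Finset.sum_congr rfl fun j _ => mul_comm _ _

lemma aux_fiber_biUnion (hQcov : Q.sup id = Finset.univ)
    (hPd : ∀ a ∈ P, ∀ b ∈ P, a ≠ b → Disjoint a b)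
    (hpa : ∀ a ∈ Q, pa a ∈ P ∧ a ⊆ pa a) {I : Finset V} (hI : I ∈ P) :
    (Q.filter (fun a => pa a = I)).biUnion id = I := by
  ext v
  simp only [Finset.mem_biUnion, Finset.mem_filter, id]
  constructor
  · rintro ⟨a, ⟨haQ, hpaI⟩, hva⟩
    exact hpaI ▸ (hpa a haQ).2 hva
  · intro hvI
    have hv : v ∈ Q.biUnion id := by
      rw [← Finset.sup_eq_biUnion, hQcov]; exact Finset.mem_univ v
    obtain ⟨a, haQ, hva⟩ := Finset.mem_biUnion.1 hv
    refine ⟨a, ⟨haQ, ?_⟩, hva⟩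
    by_contra hne
    exact Finset.disjoint_left.1 (hPd (pa a) (hpa a haQ).1 I hI hne) ((hpa a haQ).2 hva) hvI

lemma aux_sum_fiber (hQd : ∀ a ∈ Q, ∀ b ∈ Q, a ≠ b → Disjoint a b)
    (hQcov : Q.sup id = Finset.univ)
    (hPd : ∀ a ∈ P, ∀ b ∈ P, a ≠ b → Disjoint a b)
    (hpa : ∀ a ∈ Q, pa a ∈ P ∧ a ⊆ pa a) {I : Finset V} (hI : I ∈ P) (f : V → ℝ) :
    ∑ x ∈ I, f x = ∑ a ∈ Q.filter (fun a => pa a = I), ∑ x ∈ a, f x := by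
  conv_lhs => rw [← aux_fiber_biUnion hQcov hPd hpa hI]
  exact Finset.sum_biUnion (fun a ha b hb hne =>
    hQd a (Finset.mem_filter.1 (Finset.mem_coe.1 ha)).1 b
      (Finset.mem_filter.1 (Finset.mem_coe.1 hb)).1 hne)

lemma aux_cs_fiber (hQd : ∀ a ∈ Q, ∀ b ∈ Q, a ≠ b → Disjoint a b)
    (hQcov : Q.sup id = Finset.univ)
    (hPd : ∀ a ∈ P, ∀ b ∈ P, a ≠ b → Disjoint a b)
    (hpa : ∀ a ∈ Q, pa a ∈ P ∧ a ⊆ pa a) {I J : Finset V} (hI : I ∈ P) (hJ : J ∈ P) :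
    cS M I J = ∑ a ∈ Q.filter (fun a => pa a = I), ∑ b ∈ Q.filter (fun b => pa b = J),
      cS M a b := by
  rw [cS, aux_sum_fiber hQd hQcov hPd hpa hI]
  refine Finset.sum_congr rfl fun a ha => ?_
  rw [show (∑ x ∈ a, ∑ y ∈ J, M x y) = ∑ y ∈ J, ∑ x ∈ a, M x y from Finset.sum_comm]
  rw [aux_sum_fiber hQd hQcov hPd hpa hJ (fun y => ∑ x ∈ a, M x y)]
  exact Finset.sum_congr rfl fun b hb => Finset.sum_comm

lemma aux_ip_refine
    (hPne : ∀ a ∈ P, a.Nonempty) (hPd : ∀ a ∈ P, ∀ b ∈ P, a ≠ b → Disjoint a b)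
    (hQne : ∀ a ∈ Q, a.Nonempty) (hQd : ∀ a ∈ Q, ∀ b ∈ Q, a ≠ b → Disjoint a b)
    (hQcov : Q.sup id = Finset.univ)
    (hpa : ∀ a ∈ Q, pa a ∈ P ∧ a ⊆ pa a) :
    ip (projPartition M P) (projPartition M Q) = energy M P := by
  rw [ip, aux_ip_double hQd hQcov]
  have step : ∀ a ∈ Q, ∀ b ∈ Q,
      (∑ i ∈ a, ∑ j ∈ b, projPartition M P i j * projPartition M Q i j)
      = cS M (pa a) (pa b) / ((pa a).card * (pa b).card) * cS M a b := by
    intro a ha b hb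
    have hca : (a.card : ℝ) ≠ 0 := Nat.cast_ne_zero.2 (Finset.card_ne_zero.2 (hQne a ha))
    have hcb : (b.card : ℝ) ≠ 0 := Nat.cast_ne_zero.2 (Finset.card_ne_zero.2 (hQne b hb))
    have hval : ∀ i ∈ a, ∀ j ∈ b, projPartition M P i j * projPartition M Q i j
        = cS M (pa a) (pa b) / ((pa a).card * (pa b).card) * (cS M a b / (a.card * b.card)) := by
      intro i hi j hj
      rw [aux_cellval hPd (hpa a ha).1 (hpa b hb).1 ((hpa a ha).2 hi) ((hpa b hb).2 hj),
        aux_cellval hQd ha hb hi hj]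
    rw [Finset.sum_congr rfl fun i hi => Finset.sum_congr rfl fun j hj => hval i hi j hj]
    simp only [Finset.sum_const, nsmul_eq_mul]
    field_simp
  rw [Finset.sum_congr rfl fun a ha => Finset.sum_congr rfl fun b hb => step a ha b hb]
  have h1 : ∀ (F : Finset V → ℝ), ∑ a ∈ Q, F a
      = ∑ I ∈ P, ∑ a ∈ Q.filter (fun a => pa a = I), F a :=
    fun F => (Finset.sum_fiberwise_of_maps_to (fun a ha => (hpa a ha).1) F).symm
  rw [h1]
  refine Finset.sum_congr rfl fun I hI => ?_
  have h2 : ∀ a ∈ Q.filter (fun a => pa a = I),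
      (∑ b ∈ Q, cS M (pa a) (pa b) / (((pa a).card : ℝ) * (pa b).card) * cS M a b)
      = ∑ J ∈ P, ∑ b ∈ Q.filter (fun b => pa b = J),
          cS M I J / ((I.card : ℝ) * J.card) * cS M a b := by
    intro a ha
    have hpaa : pa a = I := (Finset.mem_filter.1 ha).2
    rw [h1 (fun b => cS M (pa a) (pa b) / (((pa a).card : ℝ) * (pa b).card) * cS M a b)]
    refine Finset.sum_congr rfl fun J hJ => Finset.sum_congr rfl fun b hb => ?_
    rw [hpaa, (Finset.mem_filter.1 hb).2]
  rw [Finset.sum_congr rfl h2, Finset.sum_comm]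
  refine Finset.sum_congr rfl fun J hJ => ?_
  simp only [← Finset.mul_sum]
  rw [← aux_cs_fiber (M := M) hQd hQcov hPd hpa hI hJ]
  ring

end aux2

section aux3
open scoped Classical
variable {V : Type*} [Fintype V] [DecidableEq V]
variable (G : SimpleGraph V) [DecidableRel G.Adj] (ε : ℝ)

lemma aux_exists_witness {I J : Finset V} (h : ¬ IsRegularPair G ε I J) :
    ∃ p : Finset V × Finset V, p.1 ⊆ I ∧ p.2 ⊆ J ∧ ε * I.card < p.1.card ∧
      ε * J.card < p.2.card ∧ ε < |density G p.1 p.2 - density G I J| := by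
  unfold IsRegularPair at h
  push_neg at h
  obtain ⟨X, hX, Y, hY, h1, h2, h3⟩ := h
  exact ⟨(X, Y), hX, hY, h1, h2, h3⟩

noncomputable def Wit (I J : Finset V) : Finset V × Finset V :=
  if h : IsRegularPair G ε I J then (I, J) else (aux_exists_witness G ε h).choose

lemma Wit_sub1 (I J : Finset V) : (Wit G ε I J).1 ⊆ I := by
  unfold Wit
  split_ifs with h
  · exact subset_rfl
  · exact (aux_exists_witness G ε h).choose_spec.1

lemma Wit_sub2 (I J : Finset V) : (Wit G ε I J).2 ⊆ J := by
  unfold Wit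
  split_ifs with h
  · exact subset_rfl
  · exact (aux_exists_witness G ε h).choose_spec.2.1

lemma Wit_spec {I J : Finset V} (h : ¬ IsRegularPair G ε I J) :
    ε * I.card < (Wit G ε I J).1.card ∧ ε * J.card < (Wit G ε I J).2.card ∧
      ε < |density G (Wit G ε I J).1 (Wit G ε I J).2 - density G I J| := by
  have h' : (Wit G ε I J) = (aux_exists_witness G ε h).choose := dif_neg h
  rw [h']
  exact ⟨(aux_exists_witness G ε h).choose_spec.2.2.1,
    (aux_exists_witness G ε h).choose_spec.2.2.2.1,
    (aux_exists_witness G ε h).choose_spec.2.2.2.2⟩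

noncomputable def sig (P : Finset (Finset V)) (I : Finset V) (v : V) :
    Finset (Finset V) × Finset (Finset V) :=
  (P.filter (fun J => v ∈ (Wit G ε I J).1), P.filter (fun J => v ∈ (Wit G ε J I).2))

noncomputable def atoms (P : Finset (Finset V)) (I : Finset V) : Finset (Finset V) :=
  (I.image (sig G ε P I)).image (fun s => I.filter (fun w => sig G ε P I w = s))

variable {G ε}

lemma mem_atoms_self {P : Finset (Finset V)} {I : Finset V} {v : V} (hv : v ∈ I) :
    I.filter (fun w => sig G ε P I w = sig G ε P I v) ∈ atoms G ε P I :=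
  Finset.mem_image_of_mem _ (Finset.mem_image_of_mem _ hv)

lemma atoms_subset {P : Finset (Finset V)} {I a : Finset V} (ha : a ∈ atoms G ε P I) :
    a ⊆ I := by
  obtain ⟨s, _, rfl⟩ := Finset.mem_image.1 ha
  exact Finset.filter_subset _ _

lemma atoms_nonempty {P : Finset (Finset V)} {I a : Finset V} (ha : a ∈ atoms G ε P I) :
    a.Nonempty := by
  obtain ⟨s, hs, rfl⟩ := Finset.mem_image.1 ha
  obtain ⟨v, hv, hsv⟩ := Finset.mem_image.1 hs
  exact ⟨v, Finset.mem_filter.2 ⟨hv, hsv⟩⟩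

lemma atoms_sig_const {P : Finset (Finset V)} {I a : Finset V} (ha : a ∈ atoms G ε P I)
    {v w : V} (hv : v ∈ a) (hw : w ∈ a) : sig G ε P I v = sig G ε P I w := by
  obtain ⟨s, _, rfl⟩ := Finset.mem_image.1 ha
  rw [(Finset.mem_filter.1 hv).2, (Finset.mem_filter.1 hw).2]

lemma atoms_disjoint {P : Finset (Finset V)} {I a b : Finset V} (ha : a ∈ atoms G ε P I)
    (hb : b ∈ atoms G ε P I) (hne : a ≠ b) : Disjoint a b := by
  obtain ⟨s, _, rfl⟩ := Finset.mem_image.1 ha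
  obtain ⟨t, _, rfl⟩ := Finset.mem_image.1 hb
  refine Finset.disjoint_left.2 fun v hv hv' => hne ?_
  rw [← (Finset.mem_filter.1 hv).2, (Finset.mem_filter.1 hv').2]

lemma atoms_cover {P : Finset (Finset V)} {I : Finset V} :
    (atoms G ε P I).biUnion id = I := by
  ext v
  simp only [Finset.mem_biUnion, id]
  constructor
  · rintro ⟨a, ha, hva⟩
    exact atoms_subset ha hva
  · intro hv
    exact ⟨_, mem_atoms_self hv, Finset.mem_filter.2 ⟨hv, rfl⟩⟩

lemma atoms_card {P : Finset (Finset V)} {I : Finset V} :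
    (atoms G ε P I).card ≤ 4 ^ P.card := by
  refine (Finset.card_image_le).trans ?_
  have hsub : I.image (sig G ε P I) ⊆ P.powerset ×ˢ P.powerset := by
    intro s hs
    obtain ⟨v, _, rfl⟩ := Finset.mem_image.1 hs
    exact Finset.mem_product.2 ⟨Finset.mem_powerset.2 (Finset.filter_subset _ _),
      Finset.mem_powerset.2 (Finset.filter_subset _ _)⟩
  refine (Finset.card_le_card hsub).trans ?_
  rw [Finset.card_product, Finset.card_powerset]
  exact le_of_eq (by norm_num [← mul_pow])

end aux3

section aux4
open scoped Classical
variable {V : Type*} [Fintype V] [DecidableEq V]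
variable (G : SimpleGraph V) [DecidableRel G.Adj] (ε : ℝ) (P : Finset (Finset V))

noncomputable def Qref : Finset (Finset V) := P.biUnion (atoms G ε P)

variable {G ε P}

lemma Qref_ne {a : Finset V} (ha : a ∈ Qref G ε P) : a.Nonempty := by
  obtain ⟨I, hI, haI⟩ := Finset.mem_biUnion.1 ha
  exact atoms_nonempty haI

lemma Qref_parent {a : Finset V} (ha : a ∈ Qref G ε P) : ∃ I ∈ P, a ⊆ I := by
  obtain ⟨I, hI, haI⟩ := Finset.mem_biUnion.1 ha
  exact ⟨I, hI, atoms_subset haI⟩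

lemma Qref_disjoint (hPd : ∀ a ∈ P, ∀ b ∈ P, a ≠ b → Disjoint a b)
    {a b : Finset V} (ha : a ∈ Qref G ε P) (hb : b ∈ Qref G ε P) (hne : a ≠ b) :
    Disjoint a b := by
  obtain ⟨I, hI, haI⟩ := Finset.mem_biUnion.1 ha
  obtain ⟨J, hJ, hbJ⟩ := Finset.mem_biUnion.1 hb
  by_cases hIJ : I = J
  · subst hIJ
    exact atoms_disjoint haI hbJ hne
  · exact (hPd I hI J hJ hIJ).mono (atoms_subset haI) (atoms_subset hbJ)

lemma Qref_cover (hPcov : P.sup id = Finset.univ) : (Qref G ε P).sup id = Finset.univ := by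
  rw [Qref, Finset.sup_biUnion, ← hPcov]
  refine Finset.sup_congr rfl fun I _ => ?_
  rw [Finset.sup_eq_biUnion, atoms_cover]
  rfl

lemma Qref_card : (Qref G ε P).card ≤ P.card * 4 ^ P.card := by
  refine Finset.card_biUnion_le.trans ?_
  have := Finset.sum_le_card_nsmul P (fun I => (atoms G ε P I).card) (4 ^ P.card)
    (fun I _ => atoms_card)
  simpa [smul_eq_mul] using this

lemma Qref_box1 (hI : I ∈ P) (hJ : J ∈ P) :
    (Wit G ε I J).1 = ((Qref G ε P).filter (fun a => a ⊆ (Wit G ε I J).1)).biUnion id := by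
  ext v
  simp only [Finset.mem_biUnion, Finset.mem_filter, id]
  constructor
  · intro hv
    have hvI : v ∈ I := Wit_sub1 G ε I J hv
    refine ⟨I.filter (fun w => sig G ε P I w = sig G ε P I v),
      ⟨Finset.mem_biUnion.2 ⟨I, hI, mem_atoms_self hvI⟩, ?_⟩, Finset.mem_filter.2 ⟨hvI, rfl⟩⟩
    intro w hw
    obtain ⟨hwI, hsig⟩ := Finset.mem_filter.1 hw
    have hv1 : J ∈ (sig G ε P I v).1 := Finset.mem_filter.2 ⟨hJ, hv⟩
    have hw1 : J ∈ (sig G ε P I w).1 := by rw [hsig]; exact hv1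
    exact (Finset.mem_filter.1 hw1).2
  · rintro ⟨a, ⟨_, hsub⟩, hva⟩
    exact hsub hva

lemma Qref_box2 (hI : I ∈ P) (hJ : J ∈ P) :
    (Wit G ε I J).2 = ((Qref G ε P).filter (fun a => a ⊆ (Wit G ε I J).2)).biUnion id := by
  ext v
  simp only [Finset.mem_biUnion, Finset.mem_filter, id]
  constructor
  · intro hv
    have hvJ : v ∈ J := Wit_sub2 G ε I J hv
    refine ⟨J.filter (fun w => sig G ε P J w = sig G ε P J v),
      ⟨Finset.mem_biUnion.2 ⟨J, hJ, mem_atoms_self hvJ⟩, ?_⟩, Finset.mem_filter.2 ⟨hvJ, rfl⟩⟩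
    intro w hw
    obtain ⟨hwJ, hsig⟩ := Finset.mem_filter.1 hw
    have hv1 : I ∈ (sig G ε P J v).2 := Finset.mem_filter.2 ⟨hI, hv⟩
    have hw1 : I ∈ (sig G ε P J w).2 := by rw [hsig]; exact hv1
    exact (Finset.mem_filter.1 hw1).2
  · rintro ⟨a, ⟨_, hsub⟩, hva⟩
    exact hsub hva

lemma aux_cs_union {M : Matrix V V ℝ} {Q : Finset (Finset V)}
    (hQne : ∀ a ∈ Q, a.Nonempty) (hQd : ∀ a ∈ Q, ∀ b ∈ Q, a ≠ b → Disjoint a b)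
    {S T : Finset (Finset V)} (hS : S ⊆ Q) (hT : T ⊆ Q) :
    cS (projPartition M Q) (S.biUnion id) (T.biUnion id)
      = cS M (S.biUnion id) (T.biUnion id) := by
  have key : ∀ N : Matrix V V ℝ, cS N (S.biUnion id) (T.biUnion id)
      = ∑ a ∈ S, ∑ b ∈ T, cS N a b := by
    intro N
    have h1 : ∑ x ∈ S.biUnion id, (∑ y ∈ T.biUnion id, N x y)
        = ∑ a ∈ S, ∑ x ∈ a, ∑ y ∈ T.biUnion id, N x y :=
      Finset.sum_biUnion (fun a ha b hb hne =>
        hQd a (hS (Finset.mem_coe.1 ha)) b (hS (Finset.mem_coe.1 hb)) hne)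
    rw [cS, h1]
    refine Finset.sum_congr rfl fun a ha => ?_
    rw [show (∑ x ∈ a, ∑ y ∈ T.biUnion id, N x y) = ∑ y ∈ T.biUnion id, ∑ x ∈ a, N x y from
      Finset.sum_comm]
    have h2 : ∑ y ∈ T.biUnion id, (∑ x ∈ a, N x y)
        = ∑ b ∈ T, ∑ y ∈ b, ∑ x ∈ a, N x y :=
      Finset.sum_biUnion (fun a ha b hb hne =>
        hQd a (hT (Finset.mem_coe.1 ha)) b (hT (Finset.mem_coe.1 hb)) hne)
    rw [h2]
    exact Finset.sum_congr rfl fun b hb => Finset.sum_comm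
  rw [key, key]
  exact Finset.sum_congr rfl fun a ha => Finset.sum_congr rfl fun b hb =>
    aux_cs_cell hQd (hS ha) (hT hb) (hQne a (hS ha)) (hQne b (hT hb))

lemma aux_cs_proj_const {M : Matrix V V ℝ} (hPd : ∀ a ∈ P, ∀ b ∈ P, a ≠ b → Disjoint a b)
    {I J X Y : Finset V} (hI : I ∈ P) (hJ : J ∈ P) (hX : X ⊆ I) (hY : Y ⊆ J) :
    cS (projPartition M P) X Y = X.card * Y.card * (cS M I J / (I.card * J.card)) := by
  have : ∀ i ∈ X, ∀ j ∈ Y, projPartition M P i j = cS M I J / (I.card * J.card) :=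
    fun i hi j hj => aux_cellval hPd hI hJ (hX hi) (hY hj)
  rw [cS, Finset.sum_congr rfl fun i hi => Finset.sum_congr rfl fun j hj => this i hi j hj]
  simp only [Finset.sum_const, nsmul_eq_mul]
  ring

lemma aux_cs_adj (G : SimpleGraph V) [DecidableRel G.Adj] (X Y : Finset V) :
    cS (G.adjMatrix ℝ) X Y = (((X ×ˢ Y).filter fun p => G.Adj p.1 p.2).card : ℝ) := by
  rw [cS, show (∑ x ∈ X, ∑ y ∈ Y, G.adjMatrix ℝ x y)
      = ∑ p ∈ X ×ˢ Y, G.adjMatrix ℝ p.1 p.2 from (Finset.sum_product' _ _ _).symm]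
  simp only [SimpleGraph.adjMatrix_apply]
  rw [Finset.sum_boole]

end aux4

theorem irregular_partition_refinement {V : Type*} [Fintype V] [DecidableEq V]
    (ε : ℝ) (hε : 0 < ε) (G : SimpleGraph V) [DecidableRel G.Adj]
    (A : Matrix V V ℝ) (hA : A = G.adjMatrix ℝ)
    (P : Finset (Finset V)) (hP : IsPartition P)
    (hirr : ¬ IsRegularPartition G ε P) :
    ∃ Q : Finset (Finset V), IsPartition Q ∧ IsRefinement Q P ∧
      Q.card ≤ P.card * 4 ^ P.card ∧
      frobNorm (projPartition A Q) ^ 2 >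
        frobNorm (projPartition A P) ^ 2 + ε ^ 5 * (Fintype.card V) ^ 2 := by
  classical
  obtain ⟨hPne, hPd, hPcov⟩ := hP
  set Q := Qref G ε P with hQdef
  have hQne : ∀ a ∈ Q, a.Nonempty := fun a ha => Qref_ne ha
  have hQd : ∀ a ∈ Q, ∀ b ∈ Q, a ≠ b → Disjoint a b := fun a ha b hb => Qref_disjoint hPd ha hb
  have hQcov : Q.sup id = Finset.univ := Qref_cover hPcov
  have hQref : IsRefinement Q P := fun a ha => Qref_parent ha
  refine ⟨Q, ⟨hQne, hQd, hQcov⟩, hQref, Qref_card, ?_⟩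
  -- parent function
  set pa : Finset V → Finset V := fun a => if h : ∃ I ∈ P, a ⊆ I then h.choose else ∅ with hpadef
  have hpa : ∀ a ∈ Q, pa a ∈ P ∧ a ⊆ pa a := by
    intro a ha
    have h : ∃ I ∈ P, a ⊆ I := hQref a ha
    have : pa a = h.choose := dif_pos h
    rw [this]
    exact ⟨h.choose_spec.1, h.choose_spec.2⟩
  set AP := projPartition A P with hAP
  set AQ := projPartition A Q with hAQ
  set D := AQ - AP with hD
  have hrefl : ip AP AQ = energy A P := aux_ip_refine hPne hPd hQne hQd hQcov hpa
  have hself : ip AP AP = energy A P := aux_ip_self hPne hPd hPcov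
  have hdecomp : ip AQ AQ = ip AP AP + ip D D := by
    have h1 := aux_ip_sub_sub AQ AP
    have h2 : ip AQ AP = ip AP AQ := aux_ip_comm _ _
    rw [hD]
    linarith
  -- the bad pairs
  set Pbad := (P ×ˢ P).filter (fun p => ¬ IsRegularPair G ε p.1 p.2) with hPbad
  set box : Finset V × Finset V → Finset (V × V) :=
    fun p => (Wit G ε p.1 p.2).1 ×ˢ (Wit G ε p.1 p.2).2 with hbox
  have hipD : ip D D = ∑ z ∈ (Finset.univ ×ˢ Finset.univ : Finset (V × V)), (D z.1 z.2) ^ 2 := by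
    rw [ip, ← Finset.sum_product']
    exact Finset.sum_congr rfl fun z _ => (pow_two _).symm
  have hboxd : (↑Pbad : Set (Finset V × Finset V)).PairwiseDisjoint box := by
    intro p hp q hq hne
    have hp' := Finset.mem_product.1 (Finset.mem_filter.1 (Finset.mem_coe.1 hp)).1
    have hq' := Finset.mem_product.1 (Finset.mem_filter.1 (Finset.mem_coe.1 hq)).1
    simp only [Function.onFun, hbox]
    rw [Finset.disjoint_left]
    rintro ⟨x, y⟩ hxy hxy'
    obtain ⟨hx, hy⟩ := Finset.mem_product.1 hxy
    obtain ⟨hx', hy'⟩ := Finset.mem_product.1 hxy'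
    have hx1 : x ∈ p.1 := Wit_sub1 G ε _ _ hx
    have hx2 : x ∈ q.1 := Wit_sub1 G ε _ _ hx'
    have hy1 : y ∈ p.2 := Wit_sub2 G ε _ _ hy
    have hy2 : y ∈ q.2 := Wit_sub2 G ε _ _ hy'
    by_cases h1 : p.1 = q.1
    · have h2 : p.2 ≠ q.2 := fun h2 => hne (Prod.ext h1 h2)
      exact Finset.disjoint_left.1 (hPd p.2 hp'.2 q.2 hq'.2 h2) hy1 hy2
    · exact Finset.disjoint_left.1 (hPd p.1 hp'.1 q.1 hq'.1 h1) hx1 hx2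
  have hsub : Pbad.biUnion box ⊆ (Finset.univ ×ˢ Finset.univ : Finset (V × V)) := by
    intro z _
    exact Finset.mem_product.2 ⟨Finset.mem_univ _, Finset.mem_univ _⟩
  have hstep1 : ∑ p ∈ Pbad, ∑ z ∈ box p, (D z.1 z.2) ^ 2 ≤ ip D D := by
    rw [hipD, ← Finset.sum_biUnion hboxd]
    exact Finset.sum_le_sum_of_subset_of_nonneg hsub (fun _ _ _ => sq_nonneg _)
  -- per-pair lower bound
  have hper : ∀ p ∈ Pbad, ε ^ 4 * (p.1.card * p.2.card : ℝ) < ∑ z ∈ box p, (D z.1 z.2) ^ 2 := by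
    rintro ⟨I, J⟩ hp
    obtain ⟨hmem, hbad⟩ := Finset.mem_filter.1 hp
    obtain ⟨hI, hJ⟩ := Finset.mem_product.1 hmem
    dsimp only at hbad hI hJ
    obtain ⟨hcX, hcY, hdev⟩ := Wit_spec G ε hbad
    set X := (Wit G ε I J).1 with hX
    set Y := (Wit G ε I J).2 with hY
    have hIpos : (0:ℝ) < I.card := by
      exact_mod_cast Finset.card_pos.2 (hPne I hI)
    have hJpos : (0:ℝ) < J.card := by
      exact_mod_cast Finset.card_pos.2 (hPne J hJ)
    have hXpos : (0:ℝ) < X.card := lt_trans (by positivity) hcX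
    have hYpos : (0:ℝ) < Y.card := lt_trans (by positivity) hcY
    -- compute the box sum of D
    have hcsD : cS D X Y = cS A X Y - (X.card * Y.card) * (cS A I J / (I.card * J.card)) := by
      have hXeq : X = (Q.filter (fun a => a ⊆ X)).biUnion id := by
        rw [hX]; exact Qref_box1 hI hJ
      have hYeq : Y = (Q.filter (fun a => a ⊆ Y)).biUnion id := by
        rw [hY]; exact Qref_box2 hI hJ
      have hsubQ : cS AQ X Y = cS A X Y := by
        rw [hXeq, hYeq]
        exact aux_cs_union hQne hQd (Finset.filter_subset _ _) (Finset.filter_subset _ _)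
      have hsubP : cS AP X Y = (X.card * Y.card) * (cS A I J / (I.card * J.card)) :=
        aux_cs_proj_const hPd hI hJ (Wit_sub1 G ε I J) (Wit_sub2 G ε I J)
      have hlin : cS D X Y = cS AQ X Y - cS AP X Y := by
        simp only [cS, hD, Matrix.sub_apply, Finset.sum_sub_distrib]
      rw [hlin, hsubQ, hsubP]
    have hdXY : cS A X Y = (X.card * Y.card) * density G X Y := by
      rw [hA, aux_cs_adj, density]
      field_simp
    have hdIJ : cS A I J / (I.card * J.card) = density G I J := by
      rw [hA, aux_cs_adj, density]
    have hcsD' : cS D X Y = (X.card * Y.card) * (density G X Y - density G I J) := by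
      rw [hcsD, hdXY, hdIJ]; ring
    have hboxsum : ∑ z ∈ box (I, J), D z.1 z.2 = cS D X Y := by
      simp only [hbox]
      rw [Finset.sum_product' (f := fun x y => D x y)]
      rfl
    have hboxcard : ((box (I, J)).card : ℝ) = X.card * Y.card := by
      simp only [hbox]
      rw [Finset.card_product]
      push_cast
      rfl
    have hXYpos : (0:ℝ) < X.card * Y.card := mul_pos hXpos hYpos
    -- Cauchy-Schwarz on the box
    have hCS : (∑ z ∈ box (I, J), D z.1 z.2) ^ 2 ≤ ((box (I, J)).card : ℝ) *
        ∑ z ∈ box (I, J), (D z.1 z.2) ^ 2 := sq_sum_le_card_mul_sum_sq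
    have hgain : (X.card * Y.card : ℝ) * (density G X Y - density G I J) ^ 2
        ≤ ∑ z ∈ box (I, J), (D z.1 z.2) ^ 2 := by
      rw [hboxsum, hcsD', hboxcard] at hCS
      have h := hCS
      nlinarith [hXYpos]
    -- lower bound the gain
    have hdev2 : ε ^ 2 ≤ (density G X Y - density G I J) ^ 2 := by
      rw [← sq_abs (density G X Y - density G I J)]
      exact pow_le_pow_left₀ hε.le hdev.le 2
    have hXY : ε ^ 2 * ((I.card : ℝ) * J.card) < (X.card : ℝ) * Y.card := by
      calc ε ^ 2 * ((I.card : ℝ) * J.card) = (ε * I.card) * (ε * J.card) := by ring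
        _ < (X.card : ℝ) * Y.card := mul_lt_mul'' hcX hcY (by positivity) (by positivity)
    calc ε ^ 4 * ((I.card : ℝ) * J.card)
        = (ε ^ 2 * ((I.card : ℝ) * J.card)) * ε ^ 2 := by ring
      _ < ((X.card : ℝ) * Y.card) * ε ^ 2 := mul_lt_mul_of_pos_right hXY (by positivity)
      _ ≤ ((X.card : ℝ) * Y.card) * (density G X Y - density G I J) ^ 2 :=
          mul_le_mul_of_nonneg_left hdev2 hXYpos.le
      _ ≤ _ := hgain
  -- sum up
  have hbadne : Pbad.Nonempty := by
    rw [Finset.nonempty_iff_ne_empty]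
    intro hemp
    apply hirr
    unfold IsRegularPartition
    have : ∀ I ∈ P, ∀ J ∈ P, (if IsRegularPair G ε I J then (0:ℝ) else (I.card * J.card : ℝ)) = 0 := by
      intro I hI J hJ
      have : IsRegularPair G ε I J := by
        by_contra hbad
        have : (I, J) ∈ Pbad := Finset.mem_filter.2 ⟨Finset.mem_product.2 ⟨hI, hJ⟩, hbad⟩
        rw [hemp] at this
        exact absurd this (Finset.notMem_empty _)
      simp [this]
    rw [Finset.sum_congr rfl fun I hI => Finset.sum_congr rfl fun J hJ => this I hI J hJ]
    simp
    positivity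
  have hbadsum : ε * (Fintype.card V : ℝ) ^ 2 < ∑ p ∈ Pbad, (p.1.card * p.2.card : ℝ) := by
    have h0 := not_le.1 hirr
    unfold IsRegularPartition at h0  -- wrong; h0 is from hirr...
    have heq : ∑ p ∈ Pbad, (p.1.card * p.2.card : ℝ)
        = ∑ I ∈ P, ∑ J ∈ P, (if IsRegularPair G ε I J then 0 else (I.card * J.card : ℝ)) := by
      rw [← Finset.sum_product', hPbad, Finset.sum_filter]
      refine Finset.sum_congr rfl fun p _ => ?_
      by_cases h : IsRegularPair G ε p.1 p.2 <;> simp [h]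
    rw [heq]
    exact h0
  have hfinal : ε ^ 5 * (Fintype.card V : ℝ) ^ 2 < ip D D := by
    calc ε ^ 5 * (Fintype.card V : ℝ) ^ 2
        = ε ^ 4 * (ε * (Fintype.card V : ℝ) ^ 2) := by ring
      _ < ε ^ 4 * ∑ p ∈ Pbad, (p.1.card * p.2.card : ℝ) := by
          have hε4 : (0:ℝ) < ε ^ 4 := by positivity
          exact (mul_lt_mul_iff_right₀ hε4).2 hbadsum
      _ = ∑ p ∈ Pbad, ε ^ 4 * (p.1.card * p.2.card : ℝ) := Finset.mul_sum _ _ _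
      _ < ∑ p ∈ Pbad, ∑ z ∈ box p, (D z.1 z.2) ^ 2 := Finset.sum_lt_sum_of_nonempty hbadne hper
      _ ≤ ip D D := hstep1
  rw [aux_frob_sq, aux_frob_sq, hdecomp]
  linarith
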